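/- Let S be a string, k a positive integer, and P, Q, R patterns with P a prefix of Q and Q a prefix of R. Suppose the pair (i, j) is a consecutive occurrence of P with card{(a, b) ∈ D_S(P) : b − a < j − i} < k, and also a consecutive occurrence of R with card{(a, b) ∈ D_S(R) : b − a < j − i} < k. Then (i, j) is a consecutive occurrence of Q with card{(a, b) ∈ D_S(Q) : b − a < j − i} < k. (Hence, along a chain of patterns each a prefix of the next, the set of indices at which a fixed pair is among the k closest consecutive occurrences is an interval of consecutive integers.) -/

import Mathlib

variable {α : Type*}

/-- `i` is an occurrence of pattern `P` in string `S`. -/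
def IsOcc (S P : List α) (i : ℕ) : Prop :=
  i + P.length ≤ S.length ∧ ∀ t < P.length, S[i + t]? = P[t]?

/-- The set of occurrences of `P` in `S`. -/
def OccSet (S P : List α) : Set ℕ := {i | IsOcc S P i}

/-- `(i, j)` is a consecutive occurrence of `P` in `S`. -/
def IsConsec (S P : List α) (i j : ℕ) : Prop :=
  i < j ∧ IsOcc S P i ∧ IsOcc S P j ∧ ∀ k, i < k → k < j → ¬ IsOcc S P k

/-- The set of consecutive occurrences of `P` in `S`. -/
def DSet (S P : List α) : Set (ℕ × ℕ) := {p | IsConsec S P p.1 p.2}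

lemma occ_of_prefix {S P Q : List α} (hPQ : P <+: Q) {i : ℕ} (h : IsOcc S Q i) :
    IsOcc S P i := by
  obtain ⟨T, rfl⟩ := hPQ
  obtain ⟨h1, h2⟩ := h
  refine ⟨?_, fun t ht => ?_⟩
  · have : (P ++ T).length = P.length + T.length := List.length_append
    omega
  · have h3 := h2 t (by simp; omega)
    rw [List.getElem?_append, if_pos ht] at h3
    exact h3

lemma exists_consec_between (S P : List α) :
    ∀ d a b, b - a = d → a < b → IsOcc S P a → IsOcc S P b →
      ∃ a' b', IsConsec S P a' b' ∧ a ≤ a' ∧ b' ≤ b := by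
  intro d
  induction d using Nat.strong_induction_on with
  | _ d ih =>
    intro a b hd hab ha hb
    by_cases h : ∃ m, a < m ∧ m < b ∧ IsOcc S P m
    · obtain ⟨m, h1, h2, h3⟩ := h
      obtain ⟨a', b', hc, h4, h5⟩ := ih (b - m) (by omega) m b rfl h2 h3 hb
      exact ⟨a', b', hc, by omega, h5⟩
    · push_neg at h
      exact ⟨a, b, ⟨hab, ha, hb, fun m hm1 hm2 => h m hm1 hm2⟩, le_refl _, le_refl _⟩

/-- If `P` is a prefix of `Q` and `Q` of `R`, and the pair `(i,j)` is among the `k` closest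
consecutive occurrences of both `P` and `R`, then it is a consecutive occurrence of `Q`
which is also among the `k` closest. -/
theorem stmt_8 (S P Q R : List α) (hPQ : P <+: Q) (hQR : Q <+: R)
    (k : ℕ) (hk : 0 < k) (i j : ℕ)
    (hP : IsConsec S P i j)
    (hPtop : {p ∈ DSet S P | p.2 - p.1 < j - i}.ncard < k)
    (hR : IsConsec S R i j)
    (hRtop : {p ∈ DSet S R | p.2 - p.1 < j - i}.ncard < k) :
    IsConsec S Q i j ∧ {p ∈ DSet S Q | p.2 - p.1 < j - i}.ncard < k := by
  obtain ⟨hij, hPi, hPj, hPno⟩ := hP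
  obtain ⟨_, hRi, hRj, _⟩ := hR
  have hQi : IsOcc S Q i := occ_of_prefix hQR hRi
  have hQj : IsOcc S Q j := occ_of_prefix hQR hRj
  have hQconsec : IsConsec S Q i j :=
    ⟨hij, hQi, hQj, fun m h1 h2 hm => hPno m h1 h2 (occ_of_prefix hPQ hm)⟩
  refine ⟨hQconsec, ?_⟩
  set s : Set (ℕ × ℕ) := {p ∈ DSet S Q | p.2 - p.1 < j - i} with hs
  set t : Set (ℕ × ℕ) := {p ∈ DSet S P | p.2 - p.1 < j - i} with ht
  -- t is finite
  have htfin : t.Finite := by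
    apply ((Set.finite_Iic S.length).prod (Set.finite_Iic S.length)).subset
    rintro ⟨a, b⟩ ⟨⟨hab, ha, hb, -⟩, -⟩
    have := ha.1; have := hb.1
    exact ⟨by simp; omega, by simp; omega⟩
  -- for each p in s, choose a P-consecutive pair inside it
  have hex : ∀ p : ℕ × ℕ, p ∈ s → ∃ q : ℕ × ℕ,
      IsConsec S P q.1 q.2 ∧ p.1 ≤ q.1 ∧ q.2 ≤ p.2 := by
    rintro ⟨a, b⟩ ⟨⟨hab, ha, hb, -⟩, -⟩
    obtain ⟨a', b', hc, h1, h2⟩ := exists_consec_between S P (b - a) a b rfl hab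
      (occ_of_prefix hPQ ha) (occ_of_prefix hPQ hb)
    exact ⟨(a', b'), hc, h1, h2⟩
  classical
  choose! f hf1 hf2 hf3 using hex
  have hmap : ∀ p ∈ s, f p ∈ t := by
    intro p hp
    have h1 := hf1 p hp
    have h2 := hf2 p hp
    have h3 := hf3 p hp
    have hlt : p.2 - p.1 < j - i := hp.2
    have : (f p).1 < (f p).2 := h1.1
    exact ⟨h1, by omega⟩
  have hinj : Set.InjOn f s := by
    rintro ⟨a, b⟩ hp ⟨c, d⟩ hq heq
    obtain ⟨⟨hab, ha, hb, hno⟩, -⟩ := id hp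
    obtain ⟨⟨hcd, hc, hd, hno'⟩, -⟩ := id hq
    have h1 := hf1 (a, b) hp
    have h2 := hf2 (a, b) hp
    have h3 := hf3 (a, b) hp
    have h2' := hf2 (c, d) hq
    have h3' := hf3 (c, d) hq
    rw [heq] at h2 h3
    have hlt := h1.1
    rw [heq] at hlt
    -- now c ≤ (f (c,d)).1 < (f (c,d)).2 ≤ d and a ≤ .1, .2 ≤ b
    rcases lt_trichotomy a c with h | h | h
    · exfalso
      have hcb : ¬ c < b := fun hcb => hno c h hcb hc
      omega
    · subst h
      rcases lt_trichotomy b d with h | h | h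
      · exact absurd hb (hno' b hab h)
      · rw [h]
      · exact absurd hd (hno d hcd h)
    · exfalso
      have had : ¬ a < d := fun had => hno' a h had ha
      omega
  have := Set.ncard_le_ncard_of_injOn f hmap hinj htfin
  omega
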